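/- Let z₁, z₂, w₁, w₂ : Primes → ℂ be sequences indexed by primes with all values of modulus at most 1, and let y ≥ 2. Define D(z,w;y) = (∑_{p ≤ y prime} (1 - Re(z(p) · conj(w(p))))/p)^{1/2}. Then D(z₁,w₁;y) + D(z₂,w₂;y) ≥ D(z₁z₂, w₁w₂; y), where products of sequences are taken componentwise. -/

import Mathlib

open Complex Finset

lemma key_pointwise (a b : ℂ) (ha : ‖a‖ ≤ 1) (hb : ‖b‖ ≤ 1) :
    1 - (a * b).re ≤ (Real.sqrt (1 - a.re) + Real.sqrt (1 - b.re)) ^ 2 := by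
  have hra : |a.re| ≤ 1 := le_trans (Complex.abs_re_le_norm a) ha
  have hrb : |b.re| ≤ 1 := le_trans (Complex.abs_re_le_norm b) hb
  have hA : 0 ≤ 1 - a.re := by have := (abs_le.1 hra).2; linarith
  have hB : 0 ≤ 1 - b.re := by have := (abs_le.1 hrb).2; linarith
  have hna : ‖1 - a‖ ^ 2 ≤ 2 * (1 - a.re) := by
    have h1 : ‖a‖ ^ 2 ≤ 1 := by nlinarith [norm_nonneg a]
    have h2 : ‖a‖ ^ 2 = a.re ^ 2 + a.im ^ 2 := by
      rw [Complex.sq_norm, Complex.normSq_apply]; (try simp only [Complex.sub_re, Complex.sub_im, Complex.one_re, Complex.one_im]); ring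
    have h3 : ‖1 - a‖ ^ 2 = (1 - a.re) ^ 2 + a.im ^ 2 := by
      rw [Complex.sq_norm, Complex.normSq_apply]; (try simp only [Complex.sub_re, Complex.sub_im, Complex.one_re, Complex.one_im]); ring
    nlinarith
  have hnb : ‖1 - b‖ ^ 2 ≤ 2 * (1 - b.re) := by
    have h1 : ‖b‖ ^ 2 ≤ 1 := by nlinarith [norm_nonneg b]
    have h2 : ‖b‖ ^ 2 = b.re ^ 2 + b.im ^ 2 := by
      rw [Complex.sq_norm, Complex.normSq_apply]; (try simp only [Complex.sub_re, Complex.sub_im, Complex.one_re, Complex.one_im]); ring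
    have h3 : ‖1 - b‖ ^ 2 = (1 - b.re) ^ 2 + b.im ^ 2 := by
      rw [Complex.sq_norm, Complex.normSq_apply]; (try simp only [Complex.sub_re, Complex.sub_im, Complex.one_re, Complex.one_im]); ring
    nlinarith
  have hsa : Real.sqrt (1 - a.re) ^ 2 = 1 - a.re := Real.sq_sqrt hA
  have hsb : Real.sqrt (1 - b.re) ^ 2 = 1 - b.re := Real.sq_sqrt hB
  have hsa' : 0 ≤ Real.sqrt (1 - a.re) := Real.sqrt_nonneg _
  have hsb' : 0 ≤ Real.sqrt (1 - b.re) := Real.sqrt_nonneg _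
  -- key identity: 1 - (ab).re = (1 - a.re) + (1 - b.re) - ((1-a)(1-b)).re
  have hid : 1 - (a * b).re = (1 - a.re) + (1 - b.re) - ((1 - a) * (1 - b)).re := by
    simp [Complex.mul_re, Complex.sub_re, Complex.sub_im]; ring
  have habs : -((1 - a) * (1 - b)).re ≤ ‖1 - a‖ * ‖1 - b‖ := by
    have := (abs_le.1 (Complex.abs_re_le_norm ((1 - a) * (1 - b)))).1
    rw [norm_mul] at this
    linarith
  have hprod : ‖1 - a‖ * ‖1 - b‖ ≤ 2 * (Real.sqrt (1 - a.re) * Real.sqrt (1 - b.re)) := by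
    nlinarith [norm_nonneg (1 - a), norm_nonneg (1 - b),
      mul_nonneg hsa' hsb', sq_nonneg (‖1 - a‖ * ‖1 - b‖ - 2 * (Real.sqrt (1 - a.re) * Real.sqrt (1 - b.re))),
      sq_nonneg (‖1 - a‖ - Real.sqrt 2 * Real.sqrt (1 - a.re))]
  nlinarith [hid, habs, hprod]

theorem pretentious_triangle_inequality
    (z₁ z₂ w₁ w₂ : ℕ → ℂ)
    (hz₁ : ∀ p : ℕ, p.Prime → ‖z₁ p‖ ≤ 1) (hz₂ : ∀ p : ℕ, p.Prime → ‖z₂ p‖ ≤ 1)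
    (hw₁ : ∀ p : ℕ, p.Prime → ‖w₁ p‖ ≤ 1) (hw₂ : ∀ p : ℕ, p.Prime → ‖w₂ p‖ ≤ 1)
    (y : ℝ) (hy : 2 ≤ y) :
    Real.sqrt (∑ p ∈ (Finset.Iic ⌊y⌋₊).filter Nat.Prime,
        (1 - (z₁ p * (starRingEnd ℂ) (w₁ p)).re) / p)
      + Real.sqrt (∑ p ∈ (Finset.Iic ⌊y⌋₊).filter Nat.Prime,
        (1 - (z₂ p * (starRingEnd ℂ) (w₂ p)).re) / p)
      ≥ Real.sqrt (∑ p ∈ (Finset.Iic ⌊y⌋₊).filter Nat.Prime,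
        (1 - ((z₁ p * z₂ p) * (starRingEnd ℂ) (w₁ p * w₂ p)).re) / p) := by
  set S := (Finset.Iic ⌊y⌋₊).filter Nat.Prime with hS
  set f : ℕ → ℝ := fun p => Real.sqrt ((1 - (z₁ p * (starRingEnd ℂ) (w₁ p)).re) / p) with hf
  set g : ℕ → ℝ := fun p => Real.sqrt ((1 - (z₂ p * (starRingEnd ℂ) (w₂ p)).re) / p) with hg
  have hmem : ∀ p ∈ S, p.Prime := fun p hp => (Finset.mem_filter.1 hp).2
  -- norms of products
  have hna : ∀ p ∈ S, ‖z₁ p * (starRingEnd ℂ) (w₁ p)‖ ≤ 1 := by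
    intro p hp
    rw [norm_mul, RingHomIsometric.norm_map]
    exact mul_le_one₀ (hz₁ p (hmem p hp)) (norm_nonneg _) (hw₁ p (hmem p hp))
  have hnb : ∀ p ∈ S, ‖z₂ p * (starRingEnd ℂ) (w₂ p)‖ ≤ 1 := by
    intro p hp
    rw [norm_mul, RingHomIsometric.norm_map]
    exact mul_le_one₀ (hz₂ p (hmem p hp)) (norm_nonneg _) (hw₂ p (hmem p hp))
  have hAnn : ∀ p ∈ S, 0 ≤ (1 - (z₁ p * (starRingEnd ℂ) (w₁ p)).re) / p := by
    intro p hp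
    apply div_nonneg _ (Nat.cast_nonneg p)
    have := le_trans (Complex.abs_re_le_norm (z₁ p * (starRingEnd ℂ) (w₁ p))) (hna p hp)
    have := (abs_le.1 this).2
    linarith
  have hBnn : ∀ p ∈ S, 0 ≤ (1 - (z₂ p * (starRingEnd ℂ) (w₂ p)).re) / p := by
    intro p hp
    apply div_nonneg _ (Nat.cast_nonneg p)
    have := le_trans (Complex.abs_re_le_norm (z₂ p * (starRingEnd ℂ) (w₂ p))) (hnb p hp)
    have := (abs_le.1 this).2
    linarith
  -- pointwise bound
  have hpt : ∀ p ∈ S, (1 - ((z₁ p * z₂ p) * (starRingEnd ℂ) (w₁ p * w₂ p)).re) / p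
      ≤ (f p + g p) ^ 2 := by
    intro p hp
    have hppos : (0 : ℝ) < p := by
      exact_mod_cast (hmem p hp).pos
    have heq : (z₁ p * z₂ p) * (starRingEnd ℂ) (w₁ p * w₂ p)
        = (z₁ p * (starRingEnd ℂ) (w₁ p)) * (z₂ p * (starRingEnd ℂ) (w₂ p)) := by
      rw [map_mul]; ring
    have hkey := key_pointwise _ _ (hna p hp) (hnb p hp)
    rw [heq]
    have hA : 0 ≤ 1 - (z₁ p * (starRingEnd ℂ) (w₁ p)).re := by
      have := le_trans (Complex.abs_re_le_norm (z₁ p * (starRingEnd ℂ) (w₁ p))) (hna p hp)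
      have := (abs_le.1 this).2; linarith
    have hB : 0 ≤ 1 - (z₂ p * (starRingEnd ℂ) (w₂ p)).re := by
      have := le_trans (Complex.abs_re_le_norm (z₂ p * (starRingEnd ℂ) (w₂ p))) (hnb p hp)
      have := (abs_le.1 this).2; linarith
    have hfp : f p = Real.sqrt (1 - (z₁ p * (starRingEnd ℂ) (w₁ p)).re) / Real.sqrt p := by
      rw [hf]; exact Real.sqrt_div hA p
    have hgp : g p = Real.sqrt (1 - (z₂ p * (starRingEnd ℂ) (w₂ p)).re) / Real.sqrt p := by
      rw [hg]; exact Real.sqrt_div hB p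
    rw [hfp, hgp, ← add_div, div_pow, Real.sq_sqrt (le_of_lt hppos)]
    exact (div_le_div_iff_of_pos_right hppos).2 hkey
  -- sum steps
  have hfsq : ∑ p ∈ S, f p ^ 2 = ∑ p ∈ S, (1 - (z₁ p * (starRingEnd ℂ) (w₁ p)).re) / p :=
    Finset.sum_congr rfl (fun p hp => Real.sq_sqrt (hAnn p hp))
  have hgsq : ∑ p ∈ S, g p ^ 2 = ∑ p ∈ S, (1 - (z₂ p * (starRingEnd ℂ) (w₂ p)).re) / p :=
    Finset.sum_congr rfl (fun p hp => Real.sq_sqrt (hBnn p hp))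
  have hCS : (∑ p ∈ S, f p * g p) ^ 2 ≤ (∑ p ∈ S, f p ^ 2) * ∑ p ∈ S, g p ^ 2 :=
    Finset.sum_mul_sq_le_sq_mul_sq S f g
  have hfg_nn : 0 ≤ ∑ p ∈ S, f p * g p :=
    Finset.sum_nonneg fun p _ => mul_nonneg (Real.sqrt_nonneg _) (Real.sqrt_nonneg _)
  have hfs_nn : 0 ≤ ∑ p ∈ S, f p ^ 2 := Finset.sum_nonneg fun p _ => sq_nonneg _
  have hgs_nn : 0 ≤ ∑ p ∈ S, g p ^ 2 := Finset.sum_nonneg fun p _ => sq_nonneg _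
  have hfg : ∑ p ∈ S, f p * g p
      ≤ Real.sqrt (∑ p ∈ S, f p ^ 2) * Real.sqrt (∑ p ∈ S, g p ^ 2) := by
    rw [← Real.sqrt_mul hfs_nn]
    calc ∑ p ∈ S, f p * g p = Real.sqrt ((∑ p ∈ S, f p * g p) ^ 2) := by
          rw [Real.sqrt_sq hfg_nn]
      _ ≤ Real.sqrt ((∑ p ∈ S, f p ^ 2) * ∑ p ∈ S, g p ^ 2) := Real.sqrt_le_sqrt hCS
  have hsum : ∑ p ∈ S, (1 - ((z₁ p * z₂ p) * (starRingEnd ℂ) (w₁ p * w₂ p)).re) / p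
      ≤ (Real.sqrt (∑ p ∈ S, f p ^ 2) + Real.sqrt (∑ p ∈ S, g p ^ 2)) ^ 2 := by
    calc ∑ p ∈ S, (1 - ((z₁ p * z₂ p) * (starRingEnd ℂ) (w₁ p * w₂ p)).re) / p
        ≤ ∑ p ∈ S, (f p + g p) ^ 2 := Finset.sum_le_sum hpt
      _ = (∑ p ∈ S, f p ^ 2) + 2 * (∑ p ∈ S, f p * g p) + ∑ p ∈ S, g p ^ 2 := by
          rw [Finset.mul_sum, ← Finset.sum_add_distrib, ← Finset.sum_add_distrib]
          exact Finset.sum_congr rfl fun p _ => by ring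
      _ ≤ (Real.sqrt (∑ p ∈ S, f p ^ 2) + Real.sqrt (∑ p ∈ S, g p ^ 2)) ^ 2 := by
          have h1 := Real.sq_sqrt hfs_nn
          have h2 := Real.sq_sqrt hgs_nn
          nlinarith [hfg]
  rw [ge_iff_le, ← hfsq, ← hgsq]
  calc Real.sqrt (∑ p ∈ S, (1 - ((z₁ p * z₂ p) * (starRingEnd ℂ) (w₁ p * w₂ p)).re) / p)
      ≤ Real.sqrt ((Real.sqrt (∑ p ∈ S, f p ^ 2) + Real.sqrt (∑ p ∈ S, g p ^ 2)) ^ 2) :=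
        Real.sqrt_le_sqrt hsum
    _ = Real.sqrt (∑ p ∈ S, f p ^ 2) + Real.sqrt (∑ p ∈ S, g p ^ 2) :=
        Real.sqrt_sq (by positivity)
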